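/- A linear form α = Σ_i a_i e_i^* on ℝ^∞ is strictly negative on all nonzero elements of every cone in the family consisting of Chen cones, their faces, and the transverse cones to their faces, if and only if a_i < a_{i+1} < 0 for all i ≥ 1. -/

import Mathlib

open Finset

/-- The closed convex polyhedral cone generated by vectors `v 0, …, v (n-1)`. -/
def polyCone {V : Type*} [AddCommGroup V] [Module ℝ V] {n : ℕ} (v : Fin n → V) : Set V :=
  {x | ∃ c : Fin n → ℝ, (∀ i, 0 ≤ c i) ∧ x = ∑ i, c i • v i}

/-- `F` is a face of the cone `C` (cut out by a supporting linear functional). -/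
def IsFace {V : Type*} [AddCommGroup V] [Module ℝ V] (C F : Set V) : Prop :=
  ∃ ℓ : V →ₗ[ℝ] ℝ, (∀ x ∈ C, ℓ x ≤ 0) ∧ F = {x ∈ C | ℓ x = 0}

/-- The transverse cone `t(C,F)` in `ℝ^k`. -/
noncomputable def tCone {k : ℕ} (C F : Set (EuclideanSpace ℝ (Fin k))) :
    Set (EuclideanSpace ℝ (Fin k)) :=
  (fun x => (Submodule.orthogonalProjection (Submodule.span ℝ F)ᗮ x : EuclideanSpace ℝ (Fin k))) '' C

/-- The generators `vᵢ = e₁ + ⋯ + eᵢ` of the Chen cone in `ℝ^k`. -/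
noncomputable def chenGen (k : ℕ) (i : Fin k) : EuclideanSpace ℝ (Fin k) :=
  ∑ j ∈ Finset.univ.filter (fun j : Fin k => (j : ℕ) ≤ (i : ℕ)),
    EuclideanSpace.single j (1 : ℝ)

/-- The Chen cone `⟨v₁, …, v_k⟩` in `ℝ^k`. -/
noncomputable def chenCone (k : ℕ) : Set (EuclideanSpace ℝ (Fin k)) :=
  polyCone (chenGen k)

/-- The family consisting of the faces of the Chen cone (including the cone itself) and
the transverse cones to its faces. -/
noncomputable def chenFamily (k : ℕ) : Set (Set (EuclideanSpace ℝ (Fin k))) :=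
  {F | IsFace (chenCone k) F} ∪
    {T | ∃ F, IsFace (chenCone k) F ∧ T = tCone (chenCone k) F}

namespace Chen12

lemma filter_le_eq_Iic {k : ℕ} (m : Fin k) :
    Finset.univ.filter (fun x : Fin k => (x:ℕ) ≤ (m:ℕ)) = Finset.Iic m := by
  ext x
  simp only [Finset.mem_filter, Finset.mem_univ, true_and, Finset.mem_Iic, Fin.le_def]

lemma Iic_nat (n : ℕ) : Finset.Iic n = Finset.range (n+1) := by
  ext x; simp [Nat.lt_succ_iff]

lemma sum_fin_ite {k : ℕ} (m : Fin k) (f : ℕ → ℝ) :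
    (∑ x : Fin k, if (x:ℕ) ≤ (m:ℕ) then f x else 0) = ∑ s ∈ Finset.range ((m:ℕ)+1), f s := by
  classical
  rw [← Finset.sum_filter, filter_le_eq_Iic, ← Iic_nat, ← Fin.map_valEmbedding_Iic,
    Finset.sum_map]
  rfl

lemma chenGen_apply (k : ℕ) (i j : Fin k) :
    chenGen k i j = if (j:ℕ) ≤ (i:ℕ) then 1 else 0 := by
  classical
  have : chenGen k i j = ∑ t ∈ Finset.univ.filter (fun t : Fin k => (t : ℕ) ≤ (i : ℕ)),
      (EuclideanSpace.single t (1:ℝ)) j := by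
    simp only [chenGen]
    induction (Finset.univ.filter (fun t : Fin k => (t : ℕ) ≤ (i : ℕ))) using Finset.induction with
    | empty => rfl
    | insert x s h ih => simp_all [Finset.sum_insert h]
  rw [this]
  simp [EuclideanSpace.single_apply, Finset.sum_ite_eq']

noncomputable def aMap (a : ℕ → ℝ) (k : ℕ) : EuclideanSpace ℝ (Fin k) →ₗ[ℝ] ℝ where
  toFun x := ∑ i : Fin k, a i * x i
  map_add' x y := by
    simp only [PiLp.add_apply, mul_add, Finset.sum_add_distrib]
  map_smul' c x := by
    simp only [PiLp.smul_apply, smul_eq_mul, RingHom.id_apply, Finset.mul_sum]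
    exact Finset.sum_congr rfl fun _ _ => by ring

@[simp] lemma aMap_apply (a : ℕ → ℝ) (k : ℕ) (x : EuclideanSpace ℝ (Fin k)) :
    aMap a k x = ∑ i : Fin k, a i * x i := rfl

lemma aMap_chenGen (a : ℕ → ℝ) (k : ℕ) (i : Fin k) :
    aMap a k (chenGen k i) = ∑ s ∈ Finset.range ((i:ℕ)+1), a s := by
  classical
  rw [aMap_apply]
  rw [show (∑ j : Fin k, a j * chenGen k i j)
      = ∑ j : Fin k, if (j:ℕ) ≤ (i:ℕ) then a j else 0 from
    Finset.sum_congr rfl fun j _ => by rw [chenGen_apply]; split <;> simp]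
  exact sum_fin_ite i a

lemma inner_chenGen (k : ℕ) (i t : Fin k) :
    (inner ℝ (chenGen k i) (chenGen k t) : ℝ) = min (i:ℕ) (t:ℕ) + 1 := by
  classical
  rcases le_total (i:ℕ) (t:ℕ) with h | h
  · rw [min_eq_left h]
    simp only [PiLp.inner_apply, RCLike.inner_apply, conj_trivial]
    rw [show (∑ x : Fin k, chenGen k t x * chenGen k i x)
        = ∑ x : Fin k, if (x:ℕ) ≤ (i:ℕ) then (1:ℝ) else 0 from
      Finset.sum_congr rfl fun x _ => by
        rw [chenGen_apply, chenGen_apply]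
        by_cases hx : (x:ℕ) ≤ (i:ℕ)
        · simp [hx, hx.trans h]
        · simp [hx]]
    rw [sum_fin_ite i (fun _ => (1:ℝ))]
    simp
  · rw [min_eq_right h]
    simp only [PiLp.inner_apply, RCLike.inner_apply, conj_trivial]
    rw [show (∑ x : Fin k, chenGen k t x * chenGen k i x)
        = ∑ x : Fin k, if (x:ℕ) ≤ (t:ℕ) then (1:ℝ) else 0 from
      Finset.sum_congr rfl fun x _ => by
        rw [chenGen_apply, chenGen_apply]
        by_cases hx : (x:ℕ) ≤ (t:ℕ)
        · simp [hx, hx.trans h]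
        · simp [hx]]
    rw [sum_fin_ite t (fun _ => (1:ℝ))]
    simp

lemma chenGen_mem (k : ℕ) (i : Fin k) : chenGen k i ∈ chenCone k := by
  classical
  exact ⟨fun j => if j = i then 1 else 0, fun j => by positivity,
    by simp [Finset.sum_ite_eq']⟩

lemma zero_mem_chenCone (k : ℕ) : (0 : EuclideanSpace ℝ (Fin k)) ∈ chenCone k :=
  ⟨0, fun _ => le_refl _, by simp⟩

variable {k : ℕ}

lemma esum_apply {ι : Type*} (s : Finset ι) (f : ι → EuclideanSpace ℝ (Fin k)) (j : Fin k) :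
    (∑ t ∈ s, f t) j = ∑ t ∈ s, f t j := by
  classical
  induction s using Finset.cons_induction with
  | empty => rfl
  | cons i s hi ih => rw [Finset.sum_cons, Finset.sum_cons, ← ih]; rfl

noncomputable def coordL (k : ℕ) (j : Fin k) : EuclideanSpace ℝ (Fin k) →ₗ[ℝ] ℝ where
  toFun x := x j
  map_add' _ _ := rfl
  map_smul' _ _ := rfl

@[simp] lemma coordL_apply (j : Fin k) (x : EuclideanSpace ℝ (Fin k)) :
    coordL k j x = x j := rfl

/-- A linear functional nonpositive on the generators is nonpositive on the cone. -/
lemma supp_of_gen (ℓ : EuclideanSpace ℝ (Fin k) →ₗ[ℝ] ℝ)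
    (h : ∀ t, ℓ (chenGen k t) ≤ 0) : ∀ x ∈ chenCone k, ℓ x ≤ 0 := by
  rintro x ⟨c, hc, rfl⟩
  rw [map_sum]
  apply Finset.sum_nonpos
  intro t _
  rw [map_smul, smul_eq_mul]
  exact mul_nonpos_of_nonneg_of_nonpos (hc t) (h t)

/-- If all `a i < 0` then the form is negative on nonzero points of the Chen cone. -/
lemma neg_on_chenCone {a : ℕ → ℝ} (ha : ∀ i, a i < 0) {x : EuclideanSpace ℝ (Fin k)}
    (hx : x ∈ chenCone k) (hx0 : x ≠ 0) : aMap a k x < 0 := by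
  obtain ⟨c, hc, rfl⟩ := hx
  have hne : ∃ i, c i ≠ 0 := by
    by_contra h
    push_neg at h
    exact hx0 (by simp [h])
  obtain ⟨i0, hi0⟩ := hne
  rw [map_sum]
  have hgen : ∀ t : Fin k, aMap a k (chenGen k t) < 0 := by
    intro t
    rw [aMap_chenGen]
    exact Finset.sum_neg (fun s _ => ha s) ⟨0, by simp⟩
  calc (∑ t : Fin k, aMap a k (c t • chenGen k t))
      < ∑ _t : Fin k, (0:ℝ) := by
        apply Finset.sum_lt_sum
        · intro t _
          rw [map_smul, smul_eq_mul]
          exact mul_nonpos_of_nonneg_of_nonpos (hc t) (hgen t).le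
        · refine ⟨i0, Finset.mem_univ _, ?_⟩
          rw [map_smul, smul_eq_mul]
          exact mul_neg_of_pos_of_neg (lt_of_le_of_ne (hc i0) (Ne.symm hi0)) (hgen i0)
    _ = 0 := by simp

lemma inner_single_right' (w : EuclideanSpace ℝ (Fin k)) (j : Fin k) :
    (inner ℝ w (EuclideanSpace.single j (1:ℝ)) : ℝ) = w j := by
  classical
  simp [PiLp.inner_apply, RCLike.inner_apply, EuclideanSpace.single_apply,
    Finset.sum_ite_eq', Finset.mem_univ]

lemma mem_orth_span {F : Set (EuclideanSpace ℝ (Fin k))} {u : EuclideanSpace ℝ (Fin k)}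
    (h : ∀ w ∈ F, (inner ℝ w u : ℝ) = 0) : u ∈ (Submodule.span ℝ F)ᗮ := by
  rw [Submodule.mem_orthogonal]
  intro w hw
  induction hw using Submodule.span_induction with
  | mem x hx => exact h x hx
  | zero => simp
  | add x y _ _ hx hy => rw [inner_add_left, hx, hy, add_zero]
  | smul c x _ hx => rw [real_inner_smul_left, hx, mul_zero]

/-- Forward extraction: each `a i` is negative. -/
lemma forward_neg {a : ℕ → ℝ}
    (H : ∀ (k : ℕ), ∀ S ∈ chenFamily k, ∀ x ∈ S, x ≠ 0 →
        ∑ t : Fin k, a (t : ℕ) * x t < 0) (i : ℕ) : a i < 0 := by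
  classical
  set k := i + 1 with hk
  set j : Fin k := Fin.last i with hj
  set ℓ : EuclideanSpace ℝ (Fin k) →ₗ[ℝ] ℝ := -(coordL k j) with hℓ
  have hℓgen : ∀ t : Fin k, ℓ (chenGen k t) = if (i:ℕ) ≤ (t:ℕ) then -1 else 0 := by
    intro t
    have : ℓ (chenGen k t) = -(chenGen k t j) := rfl
    rw [this, chenGen_apply]
    simp only [hj, Fin.val_last]
    split <;> norm_num
  have hsupp : ∀ x ∈ chenCone k, ℓ x ≤ 0 := by
    apply supp_of_gen
    intro t
    rw [hℓgen]
    split <;> norm_num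
  set F : Set (EuclideanSpace ℝ (Fin k)) := {x ∈ chenCone k | ℓ x = 0} with hF
  have hface : IsFace (chenCone k) F := ⟨ℓ, hsupp, rfl⟩
  have hS : tCone (chenCone k) F ∈ chenFamily k := Or.inr ⟨F, hface, rfl⟩
  set u : EuclideanSpace ℝ (Fin k) := EuclideanSpace.single j (1:ℝ) with hu
  have huW : u ∈ (Submodule.span ℝ F)ᗮ := by
    apply mem_orth_span
    rintro w ⟨hwC, hwℓ⟩
    rw [hu, inner_single_right']
    have : ℓ w = -(w j) := rfl
    rw [this] at hwℓ
    linarith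
  have hyu : chenGen k j - u ∈ Submodule.span ℝ F := by
    rcases Nat.eq_zero_or_pos i with hi | hi
    · subst hi
      have : chenGen k j - u = 0 := by
        ext s
        have hs : (s:ℕ) = 0 := by omega
        simp [chenGen_apply, hu, EuclideanSpace.single_apply, Fin.ext_iff, hs, hj]
      rw [this]
      exact Submodule.zero_mem _
    · set t0 : Fin k := ⟨i - 1, by omega⟩ with ht0
      have heq : chenGen k j - u = chenGen k t0 := by
        ext s
        have hs : (s:ℕ) ≤ i := by omega
        simp only [PiLp.sub_apply, chenGen_apply, hu, EuclideanSpace.single_apply,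
          Fin.ext_iff, ht0, hj, Fin.val_last]
        split_ifs with h1 h2 h3 <;> try norm_num
        all_goals omega
      rw [heq]
      apply Submodule.subset_span
      refine ⟨chenGen_mem k t0, ?_⟩
      rw [hℓgen, if_neg (by simp [ht0]; omega)]
  have hproj : (Submodule.orthogonalProjection (Submodule.span ℝ F)ᗮ (chenGen k j) :
      EuclideanSpace ℝ (Fin k)) = u := by
    apply Submodule.eq_starProjection_of_mem_orthogonal huW
    exact Submodule.le_orthogonal_orthogonal _ hyu
  have hmem : u ∈ tCone (chenCone k) F := ⟨chenGen k j, chenGen_mem k j, hproj⟩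
  have hne : u ≠ 0 := by
    intro h0
    have h1 : u j = 1 := by simp [hu, EuclideanSpace.single_apply]
    rw [h0] at h1
    simp at h1
  have := H k _ hS u hmem hne
  have hval : (∑ t : Fin k, a (t:ℕ) * u t) = a i := by
    rw [show (∑ t : Fin k, a (t:ℕ) * u t) = ∑ t : Fin k,
        if t = j then a (t:ℕ) else 0 from Finset.sum_congr rfl fun t _ => by
      simp only [hu, EuclideanSpace.single_apply]
      split <;> simp]
    rw [Finset.sum_ite_eq' Finset.univ j (fun t => a (t:ℕ))]
    simp [hj]
  rwa [hval] at this

/-- Forward extraction: `a` is strictly increasing. -/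
lemma forward_lt {a : ℕ → ℝ}
    (H : ∀ (k : ℕ), ∀ S ∈ chenFamily k, ∀ x ∈ S, x ≠ 0 →
        ∑ t : Fin k, a (t : ℕ) * x t < 0) (i : ℕ) : a i < a (i + 1) := by
  classical
  set k := i + 2 with hk
  set j1 : Fin k := ⟨i, by omega⟩ with hj1
  set j2 : Fin k := ⟨i + 1, by omega⟩ with hj2
  set ℓ : EuclideanSpace ℝ (Fin k) →ₗ[ℝ] ℝ := coordL k j2 - coordL k j1 with hℓ
  have hℓx : ∀ x : EuclideanSpace ℝ (Fin k), ℓ x = x j2 - x j1 := fun x => rfl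
  have hℓgen : ∀ t : Fin k, ℓ (chenGen k t) = if (t:ℕ) = i then -1 else 0 := by
    intro t
    rw [hℓx, chenGen_apply, chenGen_apply]
    simp only [hj1, hj2]
    split_ifs <;> try norm_num
    all_goals omega
  have hsupp : ∀ x ∈ chenCone k, ℓ x ≤ 0 := by
    apply supp_of_gen
    intro t
    rw [hℓgen]
    split <;> norm_num
  set F : Set (EuclideanSpace ℝ (Fin k)) := {x ∈ chenCone k | ℓ x = 0} with hF
  have hface : IsFace (chenCone k) F := ⟨ℓ, hsupp, rfl⟩
  have hS : tCone (chenCone k) F ∈ chenFamily k := Or.inr ⟨F, hface, rfl⟩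
  set u : EuclideanSpace ℝ (Fin k) :=
    EuclideanSpace.single j1 (1:ℝ) - EuclideanSpace.single j2 (1:ℝ) with hu
  set v : EuclideanSpace ℝ (Fin k) := (2⁻¹ : ℝ) • u with hv
  have huW : u ∈ (Submodule.span ℝ F)ᗮ := by
    apply mem_orth_span
    rintro w ⟨hwC, hwℓ⟩
    rw [hu, inner_sub_right, inner_single_right', inner_single_right']
    rw [hℓx] at hwℓ
    linarith
  have hvW : v ∈ (Submodule.span ℝ F)ᗮ := Submodule.smul_mem _ _ huW
  -- the previous generator (or 0)
  set w1 : EuclideanSpace ℝ (Fin k) :=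
    if h : i = 0 then 0 else chenGen k ⟨i - 1, by omega⟩ with hw1
  have hw1F : w1 ∈ Submodule.span ℝ F := by
    rw [hw1]
    split_ifs with h
    · exact Submodule.zero_mem _
    · apply Submodule.subset_span
      refine ⟨chenGen_mem k _, ?_⟩
      rw [hℓgen]
      rw [if_neg (by simp only [Fin.val_mk]; omega)]
  have hw1c : ∀ s : Fin k, w1 s = if (s:ℕ) + 1 ≤ i then 1 else 0 := by
    intro s
    rw [hw1]
    split_ifs with h h2
    · simp at h2; omega
    · rfl
    · rw [chenGen_apply, if_pos (by simp; omega)]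
    · rw [chenGen_apply, if_neg (by simp; omega)]
  have hyu : chenGen k j1 - v ∈ Submodule.span ℝ F := by
    have heq : chenGen k j1 - v
        = (2⁻¹ : ℝ) • w1 + (2⁻¹ : ℝ) • chenGen k j2 := by
      ext s
      simp only [PiLp.sub_apply, PiLp.add_apply, PiLp.smul_apply, hv, hu,
        PiLp.sub_apply, smul_eq_mul, chenGen_apply, EuclideanSpace.single_apply,
        hw1c s, Fin.ext_iff, hj1, hj2]
      have hs : (s:ℕ) < i + 2 := s.isLt
      split_ifs <;> try norm_num
      all_goals omega
    rw [heq]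
    exact Submodule.add_mem _ (Submodule.smul_mem _ _ hw1F)
      (Submodule.smul_mem _ _ (Submodule.subset_span ⟨chenGen_mem k j2, by
        rw [hℓgen]; rw [if_neg (by simp [hj2])]⟩))
  have hproj : (Submodule.orthogonalProjection (Submodule.span ℝ F)ᗮ (chenGen k j1) :
      EuclideanSpace ℝ (Fin k)) = v := by
    apply Submodule.eq_starProjection_of_mem_orthogonal hvW
    exact Submodule.le_orthogonal_orthogonal _ hyu
  have hmem : v ∈ tCone (chenCone k) F := ⟨chenGen k j1, chenGen_mem k j1, hproj⟩
  have hvc : ∀ s : Fin k, v s = 2⁻¹ * ((if (s:ℕ) = i then 1 else 0)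
      - (if (s:ℕ) = i + 1 then 1 else 0)) := by
    intro s
    simp only [hv, hu, PiLp.smul_apply, PiLp.sub_apply, smul_eq_mul,
      EuclideanSpace.single_apply, Fin.ext_iff, hj1, hj2]
  have hne : v ≠ 0 := by
    intro h0
    have h1 : v j1 = 2⁻¹ := by rw [hvc]; simp [hj1]
    rw [h0] at h1
    norm_num at h1
  have hlt := H k _ hS v hmem hne
  have hval : (∑ t : Fin k, a (t:ℕ) * v t) = 2⁻¹ * (a i - a (i+1)) := by
    rw [show (∑ t : Fin k, a (t:ℕ) * v t)
        = ∑ t : Fin k, (2⁻¹ * ((if (t:ℕ) = i then a (t:ℕ) else 0)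
            - (if (t:ℕ) = i + 1 then a (t:ℕ) else 0))) from
      Finset.sum_congr rfl fun t _ => by rw [hvc t]; split_ifs <;> ring]
    rw [← Finset.mul_sum]
    congr 1
    rw [Finset.sum_sub_distrib]
    congr 1
    · rw [show (∑ t : Fin k, if (t:ℕ) = i then a (t:ℕ) else 0)
          = ∑ t : Fin k, if t = j1 then a i else 0 from
        Finset.sum_congr rfl fun t _ => by
          simp only [Fin.ext_iff, hj1]
          split_ifs with h <;> simp [h]]
      rw [Finset.sum_ite_eq' Finset.univ j1 (fun _ => a i)]
      simp
    · rw [show (∑ t : Fin k, if (t:ℕ) = i + 1 then a (t:ℕ) else 0)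
          = ∑ t : Fin k, if t = j2 then a (i+1) else 0 from
        Finset.sum_congr rfl fun t _ => by
          simp only [Fin.ext_iff, hj2]
          split_ifs with h <;> simp [h]]
      rw [Finset.sum_ite_eq' Finset.univ j2 (fun _ => a (i+1))]
      simp
  rw [hval] at hlt
  nlinarith

/-- Key combinatorial lemma: for `j ∉ I` there is a vector `p` (the projection of `v j`
orthogonal to the span of the `v t`, `t ∈ I`) with `α p < 0`. -/
lemma key (a : ℕ → ℝ) (hmono : ∀ i, a i < a (i+1)) (hneg : ∀ i, a i < 0)
    {k : ℕ} (I : Finset (Fin k)) (j : Fin k) (hj : j ∉ I) :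
    ∃ p : EuclideanSpace ℝ (Fin k),
      (∀ t ∈ I, (inner ℝ (chenGen k t) p : ℝ) = 0) ∧
      chenGen k j - p ∈ Submodule.span ℝ (chenGen k '' (I : Set (Fin k))) ∧
      aMap a k p < 0 := by
  classical
  set B : Finset (Fin k) := I.filter (fun t => (t:ℕ) < (j:ℕ)) with hB
  set A : Finset (Fin k) := I.filter (fun t => (j:ℕ) < (t:ℕ)) with hA
  have hBA : ∀ t ∈ I, t ∈ B ∨ t ∈ A := by
    intro t ht
    rcases lt_trichotomy ((t:ℕ)) ((j:ℕ)) with h | h | h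
    · exact Or.inl (Finset.mem_filter.2 ⟨ht, h⟩)
    · exact absurd (Fin.ext h) (fun he => hj (he ▸ ht))
    · exact Or.inr (Finset.mem_filter.2 ⟨ht, h⟩)
  set prev : EuclideanSpace ℝ (Fin k) :=
    if hBn : B.Nonempty then chenGen k (B.max' hBn) else 0 with hprev
  set b : ℕ := if hBn : B.Nonempty then ((B.max' hBn : Fin k):ℕ) + 1 else 0 with hb
  have hb_le : b ≤ (j:ℕ) := by
    rw [hb]
    split_ifs with hBn
    · have h2 := (Finset.mem_filter.mp (B.max'_mem hBn)).2
      omega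
    · omega
  have hBlt : ∀ t ∈ B, (t:ℕ) < b := by
    intro t ht
    have hBn : B.Nonempty := ⟨t, ht⟩
    have := B.le_max' t ht
    rw [hb, dif_pos hBn]
    exact Nat.lt_succ_of_le this
  have hprev_apply : ∀ s : Fin k, prev s = if (s:ℕ) < b then 1 else 0 := by
    intro s
    rw [hprev, hb]
    by_cases hBn : B.Nonempty
    · rw [dif_pos hBn, dif_pos hBn, chenGen_apply]
      by_cases h1 : (s:ℕ) < ((B.max' hBn : Fin k):ℕ) + 1
      · rw [if_pos (by omega), if_pos h1]
      · rw [if_neg (by omega), if_neg h1]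
    · rw [dif_neg hBn, dif_neg hBn, if_neg (by omega)]
      rfl
  have hprev_mem : prev ∈ Submodule.span ℝ (chenGen k '' (I : Set (Fin k))) := by
    rw [hprev]
    split_ifs with hBn
    · apply Submodule.subset_span
      exact ⟨B.max' hBn, (Finset.mem_filter.mp (B.max'_mem hBn)).1, rfl⟩
    · exact Submodule.zero_mem _
  have hprev_inner : ∀ t : Fin k,
      (inner ℝ (chenGen k t) prev : ℝ) = ((min ((t:ℕ)+1) b : ℕ) : ℝ) := by
    intro t
    rw [hprev, hb]
    split_ifs with hBn
    · rw [inner_chenGen]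
      have : min ((t:ℕ)+1) (((B.max' hBn : Fin k):ℕ)+1)
          = min ((t:ℕ)) (((B.max' hBn : Fin k):ℕ)) + 1 := by omega
      rw [this]
      push_cast
      ring
    · simp
  have hprev_aMap : aMap a k prev = ∑ s ∈ Finset.range b, a s := by
    rw [hprev, hb]
    split_ifs with hBn
    · rw [aMap_chenGen]
    · simp
  by_cases hAn : A.Nonempty
  · -- there is a generator above j
    set c0 : Fin k := A.min' hAn with hc0
    have hc0A : c0 ∈ A := A.min'_mem hAn
    have hc0I : c0 ∈ I := (Finset.mem_filter.1 hc0A).1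
    have hjc : (j:ℕ) < (c0:ℕ) := (Finset.mem_filter.1 hc0A).2
    have hAle : ∀ t ∈ A, (c0:ℕ) ≤ (t:ℕ) := fun t ht => A.min'_le t ht
    set Pr : ℝ := ((j:ℕ):ℝ) + 1 - (b:ℝ) with hPr
    set Qr : ℝ := ((c0:ℕ):ℝ) - ((j:ℕ):ℝ) with hQr
    have hPr1 : (1:ℝ) ≤ Pr := by
      rw [hPr]
      have : (b:ℝ) ≤ ((j:ℕ):ℝ) := by exact_mod_cast hb_le
      linarith
    have hQr1 : (1:ℝ) ≤ Qr := by
      rw [hQr]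
      have : ((j:ℕ):ℝ) + 1 ≤ ((c0:ℕ):ℝ) := by exact_mod_cast hjc
      linarith
    have hPQ : (0:ℝ) < Pr + Qr := by linarith
    set r : ℝ := Pr / (Pr + Qr) with hr
    have hr_pos : 0 < r := div_pos (by linarith) hPQ
    have hr_lt : r < 1 := by
      rw [hr, div_lt_one hPQ]
      linarith
    have hr_eq : r * (Pr + Qr) = Pr := by
      rw [hr]
      field_simp
    refine ⟨chenGen k j - ((1 - r) • prev + r • chenGen k c0), ?_, ?_, ?_⟩
    · intro t ht
      rw [inner_sub_right, inner_add_right, real_inner_smul_right,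
        real_inner_smul_right, inner_chenGen, inner_chenGen, hprev_inner]
      rcases hBA t ht with htB | htA
      · have h1 : (t:ℕ) < b := hBlt t htB
        have h2 : (t:ℕ) < (j:ℕ) := (Finset.mem_filter.1 htB).2
        have e1 : min ((t:ℕ)) ((j:ℕ)) = (t:ℕ) := by omega
        have e2 : min ((t:ℕ)+1) b = (t:ℕ)+1 := by omega
        have e3 : min ((t:ℕ)) ((c0:ℕ)) = (t:ℕ) := by omega
        rw [e1, e2, e3]
        push_cast
        ring
      · have h1 : (c0:ℕ) ≤ (t:ℕ) := hAle t htA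
        have e1 : min ((t:ℕ)) ((j:ℕ)) = (j:ℕ) := by omega
        have e2 : min ((t:ℕ)+1) b = b := by omega
        have e3 : min ((t:ℕ)) ((c0:ℕ)) = (c0:ℕ) := by omega
        rw [e1, e2, e3]
        have hr_eq' : r * (((c0:ℕ):ℝ) + 1 - (b:ℝ)) = ((j:ℕ):ℝ) + 1 - (b:ℝ) := by
          rw [hPr, hQr] at hr_eq
          linarith
        linear_combination -hr_eq'
    · have : chenGen k j - (chenGen k j - ((1 - r) • prev + r • chenGen k c0))
          = (1 - r) • prev + r • chenGen k c0 := by abel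
      rw [this]
      exact Submodule.add_mem _ (Submodule.smul_mem _ _ hprev_mem)
        (Submodule.smul_mem _ _ (Submodule.subset_span ⟨c0, hc0I, rfl⟩))
    · rw [map_sub, map_add, map_smul, map_smul, smul_eq_mul, smul_eq_mul,
        aMap_chenGen, aMap_chenGen, hprev_aMap]
      set Sj := ∑ s ∈ Finset.range ((j:ℕ)+1), a s with hSj
      set Sb := ∑ s ∈ Finset.range b, a s with hSb
      set Sc := ∑ s ∈ Finset.range ((c0:ℕ)+1), a s with hSc
      have hU : Sj - Sb ≤ Pr * a (j:ℕ) := by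
        have h1 : Sj - Sb = ∑ s ∈ Finset.Ico b ((j:ℕ)+1), a s := by
          rw [hSj, hSb, Finset.sum_Ico_eq_sub _ (by omega)]
        have h2 : ∑ s ∈ Finset.Ico b ((j:ℕ)+1), a s
            ≤ (Finset.Ico b ((j:ℕ)+1)).card • a (j:ℕ) := by
          apply Finset.sum_le_card_nsmul
          intro s hs
          rw [Finset.mem_Ico] at hs
          have hmn : Monotone a := (strictMono_nat_of_lt_succ hmono).monotone
          exact hmn (by omega)
        rw [Nat.card_Ico, nsmul_eq_mul] at h2
        have : (((j:ℕ)+1-b : ℕ) : ℝ) = Pr := by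
          rw [hPr, Nat.cast_sub (by omega)]
          push_cast
          ring
        rw [this] at h2
        linarith [h1 ▸ h2]
      have hV : Qr * a ((j:ℕ)+1) ≤ Sc - Sj := by
        have h1 : Sc - Sj = ∑ s ∈ Finset.Ico ((j:ℕ)+1) ((c0:ℕ)+1), a s := by
          rw [hSc, hSj, Finset.sum_Ico_eq_sub _ (by omega)]
        have h2 : (Finset.Ico ((j:ℕ)+1) ((c0:ℕ)+1)).card • a ((j:ℕ)+1)
            ≤ ∑ s ∈ Finset.Ico ((j:ℕ)+1) ((c0:ℕ)+1), a s := by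
          apply Finset.card_nsmul_le_sum
          intro s hs
          rw [Finset.mem_Ico] at hs
          have hmn : Monotone a := (strictMono_nat_of_lt_succ hmono).monotone
          exact hmn (by omega)
        rw [Nat.card_Ico, nsmul_eq_mul] at h2
        have : (((c0:ℕ)+1-((j:ℕ)+1) : ℕ) : ℝ) = Qr := by
          rw [hQr, Nat.cast_sub (by omega)]
          push_cast
          ring
        rw [this] at h2
        linarith [h1 ▸ h2]
      have hgoal : Sj - ((1-r) * Sb + r * Sc) = (1-r) * (Sj - Sb) - r * (Sc - Sj) := by
        ring
      rw [hgoal]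
      have hkey : (1-r) * Pr = r * Qr := by
        rw [hr]
        field_simp
        ring
      have h1 : (1-r) * (Sj - Sb) ≤ (1-r) * (Pr * a (j:ℕ)) :=
        mul_le_mul_of_nonneg_left hU (by linarith)
      have h2 : r * (Qr * a ((j:ℕ)+1)) ≤ r * (Sc - Sj) :=
        mul_le_mul_of_nonneg_left hV (le_of_lt hr_pos)
      have h3 : (0:ℝ) < r * Qr := mul_pos hr_pos (by linarith)
      have h4 : r * Qr * (a (j:ℕ) - a ((j:ℕ)+1)) < 0 :=
        mul_neg_of_pos_of_neg h3 (by linarith [hmono (j:ℕ)])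
      have h5 : (1-r) * (Pr * a (j:ℕ)) = (r*Qr) * a (j:ℕ) := by rw [← hkey]; ring
      have h6 : r * (Qr * a ((j:ℕ)+1)) = (r*Qr) * a ((j:ℕ)+1) := by ring
      have h7 : (r*Qr) * a (j:ℕ) - (r*Qr) * a ((j:ℕ)+1)
          = r*Qr*(a (j:ℕ) - a ((j:ℕ)+1)) := by ring
      linarith [h1, h2, h4, h5, h6, h7]
  · -- no generator above j
    refine ⟨chenGen k j - prev, ?_, ?_, ?_⟩
    · intro t ht
      have htB : t ∈ B := (hBA t ht).resolve_right (fun h => hAn ⟨t, h⟩)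
      rw [inner_sub_right, inner_chenGen, hprev_inner]
      have h1 : (t:ℕ) < b := hBlt t htB
      have h2 : (t:ℕ) < (j:ℕ) := (Finset.mem_filter.1 htB).2
      have e1 : min ((t:ℕ)) ((j:ℕ)) = (t:ℕ) := by omega
      have e2 : min ((t:ℕ)+1) b = (t:ℕ)+1 := by omega
      rw [e1, e2]
      push_cast
      ring
    · have : chenGen k j - (chenGen k j - prev) = prev := by abel
      rw [this]
      exact hprev_mem
    · rw [map_sub, aMap_chenGen, hprev_aMap]
      have h1 : (∑ s ∈ Finset.range ((j:ℕ)+1), a s) - ∑ s ∈ Finset.range b, a s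
          = ∑ s ∈ Finset.Ico b ((j:ℕ)+1), a s := by
        rw [Finset.sum_Ico_eq_sub _ (by omega)]
      rw [h1]
      exact Finset.sum_neg (fun s _ => hneg s)
        ⟨(j:ℕ), Finset.mem_Ico.2 ⟨hb_le, by omega⟩⟩

/-- The form is negative on nonzero elements of transverse cones. -/
lemma neg_on_tCone {a : ℕ → ℝ} (hmono : ∀ i, a i < a (i+1)) (hneg : ∀ i, a i < 0)
    {k : ℕ} {F : Set (EuclideanSpace ℝ (Fin k))} (hface : IsFace (chenCone k) F)
    {x : EuclideanSpace ℝ (Fin k)} (hx : x ∈ tCone (chenCone k) F) (hx0 : x ≠ 0) :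
    aMap a k x < 0 := by
  classical
  obtain ⟨ℓ, hsupp, hFdef⟩ := hface
  set I : Finset (Fin k) := Finset.univ.filter (fun t => ℓ (chenGen k t) = 0) with hI
  set W := Submodule.span ℝ F with hW
  have hgenF : ∀ t ∈ I, chenGen k t ∈ F := by
    intro t ht
    rw [hFdef]
    exact ⟨chenGen_mem k t, (Finset.mem_filter.mp ht).2⟩
  have hspan_le : Submodule.span ℝ (chenGen k '' (I : Set (Fin k))) ≤ W := by
    rw [hW]
    apply Submodule.span_le.mpr
    rintro _ ⟨t, ht, rfl⟩
    exact Submodule.subset_span (hgenF t ht)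
  -- coefficients of face elements vanish outside I
  have hcoeff : ∀ w ∈ F, ∀ c : Fin k → ℝ, (∀ t, 0 ≤ c t) →
      w = ∑ t, c t • chenGen k t → ∀ t ∉ I, c t = 0 := by
    intro w hwF c hc hwc t ht
    rw [hFdef] at hwF
    obtain ⟨-, hℓw⟩ := hwF
    rw [hwc, map_sum] at hℓw
    have hterm : ∀ s ∈ Finset.univ, ℓ (c s • chenGen k s) ≤ 0 := by
      intro s _
      rw [map_smul, smul_eq_mul]
      exact mul_nonpos_of_nonneg_of_nonpos (hc s) (hsupp _ (chenGen_mem k s))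
    have hz := (Finset.sum_eq_zero_iff_of_nonpos hterm).mp hℓw t (Finset.mem_univ t)
    rw [map_smul, smul_eq_mul] at hz
    have hℓt : ℓ (chenGen k t) ≠ 0 := by
      intro h0
      exact ht (Finset.mem_filter.mpr ⟨Finset.mem_univ t, h0⟩)
    exact (mul_eq_zero.mp hz).resolve_right hℓt
  -- choose the projected generators
  have hkey : ∀ j : Fin k, j ∉ I → ∃ p : EuclideanSpace ℝ (Fin k),
      (∀ t ∈ I, (inner ℝ (chenGen k t) p : ℝ) = 0) ∧
      chenGen k j - p ∈ Submodule.span ℝ (chenGen k '' (I : Set (Fin k))) ∧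
      aMap a k p < 0 := fun j hj => key a hmono hneg I j hj
  choose! p hp1 hp2 hp3 using hkey
  -- projection of generators
  have hprojI : ∀ t ∈ I, (Submodule.orthogonalProjection Wᗮ (chenGen k t) :
      EuclideanSpace ℝ (Fin k)) = 0 := by
    intro t ht
    have h1 : chenGen k t ∈ Wᗮᗮ :=
      Submodule.le_orthogonal_orthogonal W (Submodule.subset_span (hgenF t ht))
    have := Submodule.orthogonalProjectionOnto_eq_zero_iff (K := Wᗮ).mpr h1
    rw [this]
    rfl
  have hprojN : ∀ j ∉ I, (Submodule.orthogonalProjection Wᗮ (chenGen k j) :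
      EuclideanSpace ℝ (Fin k)) = p j := by
    intro j hj
    apply Submodule.eq_starProjection_of_mem_orthogonal
    · apply mem_orth_span
      intro w hwF
      have hwC := (hFdef ▸ hwF).1
      obtain ⟨c, hc, hwc⟩ := hwC
      have hc0 : ∀ t ∉ I, c t = 0 := hcoeff w hwF c hc hwc
      rw [hwc, sum_inner]
      apply Finset.sum_eq_zero
      intro t _
      rw [real_inner_smul_left]
      by_cases htI : t ∈ I
      · rw [hp1 j hj t htI, mul_zero]
      · rw [hc0 t htI, zero_mul]
    · exact Submodule.le_orthogonal_orthogonal W (hspan_le (hp2 j hj))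
  -- decompose x
  obtain ⟨y, hyC, rfl⟩ := hx
  obtain ⟨c, hc, rfl⟩ := hyC
  have hx0' : (Submodule.orthogonalProjection Wᗮ (∑ t, c t • chenGen k t) :
      EuclideanSpace ℝ (Fin k)) ≠ 0 := hx0
  show aMap a k (Submodule.orthogonalProjection Wᗮ (∑ t, c t • chenGen k t) :
      EuclideanSpace ℝ (Fin k)) < 0
  have hxeq : (Submodule.orthogonalProjection Wᗮ (∑ t, c t • chenGen k t) :
      EuclideanSpace ℝ (Fin k))
      = ∑ t, c t • (Submodule.orthogonalProjection Wᗮ (chenGen k t) :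
          EuclideanSpace ℝ (Fin k)) := by
    rw [map_sum]
    rw [show (∑ t, Submodule.orthogonalProjection Wᗮ (c t • chenGen k t))
        = ∑ t, c t • Submodule.orthogonalProjection Wᗮ (chenGen k t) from
      Finset.sum_congr rfl fun t _ => map_smul _ _ _]
    push_cast
    rfl
  rw [hxeq] at hx0' ⊢
  have hex : ∃ t0, t0 ∉ I ∧ c t0 ≠ 0 := by
    by_contra h
    push_neg at h
    apply hx0'
    apply Finset.sum_eq_zero
    intro t _
    by_cases htI : t ∈ I
    · rw [hprojI t htI, smul_zero]
    · rw [h t htI, zero_smul]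
  obtain ⟨t0, ht0I, ht0c⟩ := hex
  rw [map_sum]
  calc (∑ t, aMap a k (c t • (Submodule.orthogonalProjection Wᗮ (chenGen k t) :
        EuclideanSpace ℝ (Fin k))))
      < ∑ _t : Fin k, (0:ℝ) := by
        apply Finset.sum_lt_sum
        · intro t _
          rw [map_smul, smul_eq_mul]
          by_cases htI : t ∈ I
          · rw [hprojI t htI, map_zero, mul_zero]
          · rw [hprojN t htI]
            exact mul_nonpos_of_nonneg_of_nonpos (hc t) (hp3 t htI).le
        · refine ⟨t0, Finset.mem_univ _, ?_⟩
          rw [map_smul, smul_eq_mul, hprojN t0 ht0I]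
          exact mul_neg_of_pos_of_neg (lt_of_le_of_ne (hc t0) (Ne.symm ht0c))
            (hp3 t0 ht0I)
    _ = 0 := by simp

end Chen12

/-- a linear form `α = Σ aᵢ eᵢ*` is strictly negative on all nonzero
elements of every Chen cone, every face of a Chen cone, and every transverse cone to a
face of a Chen cone, if and only if `a₁ < a₂ < ⋯ < 0`. -/
theorem linear_form_negative_on_chenFamily_iff (a : ℕ → ℝ) :
    (∀ (k : ℕ), ∀ S ∈ chenFamily k, ∀ x ∈ S, x ≠ 0 →
        ∑ i : Fin k, a (i : ℕ) * x i < 0) ↔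
      ((∀ i : ℕ, a i < a (i + 1)) ∧ ∀ i : ℕ, a i < 0) := by
  constructor
  · intro H
    exact ⟨Chen12.forward_lt H, Chen12.forward_neg H⟩
  · rintro ⟨hmono, hneg⟩ k S hS x hxS hx0
    have h : Chen12.aMap a k x < 0 := by
      rcases hS with hS | ⟨F, hface, rfl⟩
      · obtain ⟨ℓ, -, rfl⟩ := hS
        exact Chen12.neg_on_chenCone hneg hxS.1 hx0
      · exact Chen12.neg_on_tCone hmono hneg hface hxS hx0
    exact h
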